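/- Let a ∈ ℝ, ε = ±1, and define F(ξ) = (εa/2)(1 − tanh(aξ/2)). Then F satisfies the second-order ODE F''(ξ) = 2 F(ξ)³ − 2a² F(ξ) − 3a F'(ξ) for all ξ ∈ ℝ. -/

import Mathlib

open Real

lemma hasDerivAt_tanh' (x : ℝ) :
    HasDerivAt Real.tanh (1 - Real.tanh x ^ 2) x := by
  have hc : Real.cosh x ≠ 0 := (Real.cosh_pos x).ne'
  have h := (Real.hasDerivAt_sinh x).div (Real.hasDerivAt_cosh x) hc
  have he : (Real.cosh x * Real.cosh x - Real.sinh x * Real.sinh x) / Real.cosh x ^ 2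
      = 1 - Real.tanh x ^ 2 := by
    rw [Real.tanh_eq_sinh_div_cosh]
    field_simp
  have : HasDerivAt (fun y => Real.sinh y / Real.cosh y) (1 - Real.tanh x ^ 2) x := he ▸ h
  refine this.congr_of_eventuallyEq ?_
  filter_upwards with y
  rw [Real.tanh_eq_sinh_div_cosh]

lemma hasDerivAt_F (a ε : ℝ) (x : ℝ) :
    HasDerivAt (fun ξ => ε * a / 2 * (1 - Real.tanh (a * ξ / 2)))
      (-(ε * a / 2) * (a / 2) * (1 - Real.tanh (a * x / 2) ^ 2)) x := by
  have h1 : HasDerivAt (fun ξ : ℝ => a * ξ / 2) (a / 2) x := by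
    simpa using ((hasDerivAt_id x).const_mul a).div_const 2
  have h2 := (hasDerivAt_tanh' (a * x / 2)).comp x h1
  have h3 := ((hasDerivAt_const x (1 : ℝ)).sub h2).const_mul (ε * a / 2)
  refine h3.congr_deriv ?_
  ring

theorem aux_ode2_tanh_solution
    (a ε : ℝ) (hε : ε = 1 ∨ ε = -1) (F : ℝ → ℝ)
    (hF : ∀ ξ, F ξ = ε * a / 2 * (1 - Real.tanh (a * ξ / 2)))
    (ξ : ℝ) :
    deriv (deriv F) ξ = 2 * F ξ ^ 3 - 2 * a ^ 2 * F ξ - 3 * a * deriv F ξ := by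
  have hFeq : F = fun ξ => ε * a / 2 * (1 - Real.tanh (a * ξ / 2)) := funext hF
  have hd1 : deriv F = fun x => -(ε * a / 2) * (a / 2) * (1 - Real.tanh (a * x / 2) ^ 2) := by
    funext x
    rw [hFeq]
    exact (hasDerivAt_F a ε x).deriv
  have hd2 : deriv (deriv F) ξ
      = -(ε * a / 2) * (a / 2) * (-(2 * Real.tanh (a * ξ / 2)
          * ((a / 2) * (1 - Real.tanh (a * ξ / 2) ^ 2)))) := by
    rw [hd1]
    have h1 : HasDerivAt (fun ξ : ℝ => a * ξ / 2) (a / 2) ξ := by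
      simpa using ((hasDerivAt_id ξ).const_mul a).div_const 2
    have h2 := (hasDerivAt_tanh' (a * ξ / 2)).comp ξ h1
    have h2' : HasDerivAt (fun x => Real.tanh (a * x / 2))
        ((1 - Real.tanh (a * ξ / 2) ^ 2) * (a / 2)) ξ := by
      exact h2
    have h3 := h2'.pow 2
    have h4 := ((hasDerivAt_const ξ (1 : ℝ)).sub h3).const_mul (-(ε * a / 2) * (a / 2))
    erw [h4.deriv]; ring
  rw [hd2, hF ξ, hd1]
  simp only []
  rcases hε with h | h <;> subst h <;> ring
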